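/- Four pairwise distinct points r₁, r₂, r₃, r₄ lying on a common circle in the Euclidean plane cannot satisfy the identity 1/‖r₂−r₁‖³ + 1/‖r₄−r₃‖³ = 1/‖r₃−r₁‖³ + 1/‖r₄−r₂‖³ = 1/‖r₃−r₂‖³ + 1/‖r₄−r₁‖³. -/

import Mathlib

open Real


lemma hasDerivAt_H {y : ℝ} (hy : Real.sin y ≠ 0) :
    HasDerivAt (fun z => 1 / Real.sin z ^ 3)
      (-(3 * Real.sin y ^ 2 * Real.cos y) / (Real.sin y ^ 3) ^ 2) y := by
  have h1 : HasDerivAt (fun z => Real.sin z ^ 3) (3 * Real.sin y ^ 2 * Real.cos y) y := by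
    simpa using (Real.hasDerivAt_sin y).fun_pow 3
  simpa [one_div] using h1.fun_inv (pow_ne_zero 3 hy)

lemma strictConvexH : StrictConvexOn ℝ (Set.Ioo 0 π) (fun y => 1 / Real.sin y ^ 3) := by
  apply strictConvexOn_of_deriv2_pos (convex_Ioo 0 π)
  · apply ContinuousOn.div continuousOn_const (Real.continuous_sin.pow 3).continuousOn
    intro x hx
    exact pow_ne_zero 3 (Real.sin_pos_of_pos_of_lt_pi hx.1 hx.2).ne'
  · intro x hx
    rw [interior_Ioo] at hx
    have hs : 0 < Real.sin x := Real.sin_pos_of_pos_of_lt_pi hx.1 hx.2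
    have hev : deriv (fun z => 1 / Real.sin z ^ 3)
        =ᶠ[nhds x] (fun z => -(3 * Real.sin z ^ 2 * Real.cos z) / (Real.sin z ^ 3) ^ 2) := by
      filter_upwards [isOpen_Ioo.mem_nhds hx] with y hy
      exact (hasDerivAt_H (Real.sin_pos_of_pos_of_lt_pi hy.1 hy.2).ne').deriv
    have h2 : deriv^[2] (fun z => 1 / Real.sin z ^ 3) x
        = deriv (fun z => -(3 * Real.sin z ^ 2 * Real.cos z) / (Real.sin z ^ 3) ^ 2) x := by
      simp only [Function.iterate_succ, Function.iterate_zero, Function.comp_apply, id_eq]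
      exact hev.deriv_eq
    rw [h2]
    -- derivative of the quotient
    have hu : HasDerivAt (fun z => -(3 * Real.sin z ^ 2 * Real.cos z))
        (-(3 * (2 * Real.sin x * Real.cos x * Real.cos x + Real.sin x ^ 2 * (-Real.sin x)))) x := by
      have hpow : HasDerivAt (fun z => Real.sin z ^ 2) (2 * Real.sin x * Real.cos x) x := by
        have h := (Real.hasDerivAt_sin x).fun_pow 2
        norm_num at h
        convert h using 1
        try ring
      have h' := ((hpow.fun_mul (Real.hasDerivAt_cos x)).const_mul (3:ℝ)).fun_neg
      ring_nf at h' ⊢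
      convert h' using 2
      try ring
    have hv : HasDerivAt (fun z => (Real.sin z ^ 3) ^ 2)
        (2 * (Real.sin x ^ 3) * (3 * Real.sin x ^ 2 * Real.cos x)) x := by
      have h3 : HasDerivAt (fun z => Real.sin z ^ 3) (3 * Real.sin x ^ 2 * Real.cos x) x := by
        simpa using (Real.hasDerivAt_sin x).fun_pow 3
      have h4 := h3.fun_pow 2
      norm_num at h4
      convert h4 using 1
      try ring
    have hvne : (Real.sin x ^ 3) ^ 2 ≠ 0 := pow_ne_zero 2 (pow_ne_zero 3 hs.ne')
    have hdq := hu.fun_div hv hvne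
    rw [hdq.deriv]
    apply div_pos
    · nlinarith [pow_pos hs 9, pow_pos hs 7, sq_nonneg (Real.cos x),
        mul_nonneg (pow_pos hs 7).le (sq_nonneg (Real.cos x))]
    · positivity

lemma combo {x s t : ℝ} (hx : 0 < x) (hs : 0 < s) (ht : 0 < t) (h : x + s + t < π) :
    1 / Real.sin (x + s) ^ 3 + 1 / Real.sin (x + t) ^ 3
      < 1 / Real.sin x ^ 3 + 1 / Real.sin (x + s + t) ^ 3 := by
  have hC := strictConvexH
  have hpi : 0 < π := Real.pi_pos
  have hmem1 : x ∈ Set.Ioo 0 π := ⟨hx, by linarith⟩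
  have hmem2 : x + s + t ∈ Set.Ioo 0 π := ⟨by linarith, h⟩
  have hst : (0:ℝ) < s + t := by linarith
  have hne : x ≠ x + s + t := by linarith
  have ha : 0 < t / (s + t) := div_pos ht hst
  have hb : 0 < s / (s + t) := div_pos hs hst
  have hab : t / (s + t) + s / (s + t) = 1 := by
    rw [← add_div, add_comm t s, div_self hst.ne']
  have hba : s / (s + t) + t / (s + t) = 1 := by
    rw [← add_div, div_self hst.ne']
  have h1 := hC.2 hmem1 hmem2 hne ha hb hab
  have h2 := hC.2 hmem1 hmem2 hne hb ha hba
  have e1 : (t / (s + t)) • x + (s / (s + t)) • (x + s + t) = x + s := by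
    simp only [smul_eq_mul]
    field_simp
    ring
  have e2 : (s / (s + t)) • x + (t / (s + t)) • (x + s + t) = x + t := by
    simp only [smul_eq_mul]
    field_simp
    ring
  rw [e1] at h1
  rw [e2] at h2
  simp only [smul_eq_mul] at h1 h2
  have hsum := add_lt_add h1 h2
  have hcomb : t / (s + t) * (1 / Real.sin x ^ 3) + s / (s + t) * (1 / Real.sin (x + s + t) ^ 3)
      + (s / (s + t) * (1 / Real.sin x ^ 3) + t / (s + t) * (1 / Real.sin (x + s + t) ^ 3))
      = (t / (s + t) + s / (s + t)) * (1 / Real.sin x ^ 3 + 1 / Real.sin (x + s + t) ^ 3) := by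
    ring
  rw [hcomb, hab, one_mul] at hsum
  linarith

lemma chord_formula (ρ a b : ℝ) (hρ : 0 ≤ ρ) :
    ‖(ρ:ℂ) * Complex.exp (a * Complex.I) - ρ * Complex.exp (b * Complex.I)‖
      = 2 * ρ * |Real.sin ((a - b) / 2)| := by
  rw [← mul_sub, norm_mul, Complex.norm_real, Real.norm_of_nonneg hρ]
  have key : ‖Complex.exp (a * Complex.I) - Complex.exp (b * Complex.I)‖
      = 2 * |Real.sin ((a - b) / 2)| := by
    rw [Complex.norm_def, Complex.normSq_apply]
    simp only [Complex.sub_re, Complex.sub_im, Complex.exp_ofReal_mul_I_re,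
      Complex.exp_ofReal_mul_I_im]
    have e1 := Real.sin_sq_eq_half_sub ((a - b) / 2)
    rw [show 2 * ((a - b) / 2) = a - b by ring, Real.cos_sub] at e1
    have : (Real.cos a - Real.cos b) * (Real.cos a - Real.cos b)
        + (Real.sin a - Real.sin b) * (Real.sin a - Real.sin b)
        = (2 * |Real.sin ((a - b) / 2)|) ^ 2 := by
      rw [mul_pow, sq_abs]
      linear_combination (-4) * e1 + Real.sin_sq_add_cos_sq a + Real.sin_sq_add_cos_sq b
    rw [this, Real.sqrt_sq (by positivity)]
  rw [key]
  ring

lemma matching_sum (T : Fin 4 → Fin 4 → ℝ) (hsymm : ∀ i j, T i j = T j i)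
    (σ : Fin 4 → Fin 4) (hσ : Function.Injective σ) :
    T (σ 0) (σ 2) + T (σ 1) (σ 3) = T 0 1 + T 2 3
  ∨ T (σ 0) (σ 2) + T (σ 1) (σ 3) = T 0 2 + T 1 3
  ∨ T (σ 0) (σ 2) + T (σ 1) (σ 3) = T 0 3 + T 1 2 := by
  obtain ⟨a, ha⟩ : ∃ a, σ 0 = a := ⟨_, rfl⟩
  obtain ⟨b, hb⟩ : ∃ b, σ 1 = b := ⟨_, rfl⟩
  obtain ⟨d, hd⟩ : ∃ d, σ 2 = d := ⟨_, rfl⟩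
  obtain ⟨e, he⟩ : ∃ e, σ 3 = e := ⟨_, rfl⟩
  have hab : a ≠ b := by rintro rfl; exact absurd (hσ (ha.trans hb.symm)) (by decide)
  have had : a ≠ d := by rintro rfl; exact absurd (hσ (ha.trans hd.symm)) (by decide)
  have hae : a ≠ e := by rintro rfl; exact absurd (hσ (ha.trans he.symm)) (by decide)
  have hbd : b ≠ d := by rintro rfl; exact absurd (hσ (hb.trans hd.symm)) (by decide)
  have hbe : b ≠ e := by rintro rfl; exact absurd (hσ (hb.trans he.symm)) (by decide)
  have hde : d ≠ e := by rintro rfl; exact absurd (hσ (hd.trans he.symm)) (by decide)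
  rw [ha, hb, hd, he]
  clear ha hb hd he hσ
  fin_cases a <;> fin_cases b <;> fin_cases d <;> fin_cases e <;>
    simp_all [hsymm 1 0, hsymm 2 0, hsymm 3 0, hsymm 2 1, hsymm 3 1, hsymm 3 2, add_comm]

/-- Four pairwise distinct points on a common circle cannot satisfy the identity
1/r₁₂³ + 1/r₃₄³ = 1/r₁₃³ + 1/r₂₄³ = 1/r₂₃³ + 1/r₁₄³ on sums of inverse cubes of
distances over the three perfect matchings. -/
theorem no_cocircular_distance_identity
    (r : Fin 4 → EuclideanSpace ℝ (Fin 2))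
    (hinj : Function.Injective r)
    (c : EuclideanSpace ℝ (Fin 2)) (ρ : ℝ) (hcirc : ∀ i, dist (r i) c = ρ) :
    ¬ (1 / ‖r 1 - r 0‖ ^ 3 + 1 / ‖r 3 - r 2‖ ^ 3
          = 1 / ‖r 2 - r 0‖ ^ 3 + 1 / ‖r 3 - r 1‖ ^ 3 ∧
       1 / ‖r 2 - r 0‖ ^ 3 + 1 / ‖r 3 - r 1‖ ^ 3
          = 1 / ‖r 2 - r 1‖ ^ 3 + 1 / ‖r 3 - r 0‖ ^ 3) := by
  rintro ⟨h1, h2⟩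
  -- ρ is positive
  have hρ0 : 0 ≤ ρ := (hcirc 0) ▸ dist_nonneg
  have hρ : 0 < ρ := by
    rcases hρ0.lt_or_eq with h | h
    · exact h
    · exfalso
      have e0 : r 0 = c := dist_eq_zero.mp ((hcirc 0).trans h.symm)
      have e1 : r 1 = c := dist_eq_zero.mp ((hcirc 1).trans h.symm)
      exact absurd (hinj (e0.trans e1.symm)) (by decide)
  -- complex coordinates
  set w : Fin 4 → ℂ := fun i => (↑(r i 0 - c 0) + ↑(r i 1 - c 1) * Complex.I) with hw
  have hre : ∀ i, (w i).re = r i 0 - c 0 := by intro i; simp [hw]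
  have him : ∀ i, (w i).im = r i 1 - c 1 := by intro i; simp [hw]
  have habs : ∀ i, ‖w i‖ = ρ := by
    intro i
    rw [Complex.norm_def, Complex.normSq_apply, hre, him, ← hcirc i, EuclideanSpace.dist_eq]
    congr 1
    simp only [Fin.sum_univ_two, Real.dist_eq, sq_abs]
    ring
  have habsd : ∀ i j, ‖r i - r j‖ = ‖w i - w j‖ := by
    intro i j
    rw [Complex.norm_def, Complex.normSq_apply, EuclideanSpace.norm_eq]
    congr 1
    simp only [Fin.sum_univ_two, Complex.sub_re, Complex.sub_im, hre, him,
      PiLp.sub_apply, norm_sub_rev]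
    rw [Real.norm_eq_abs, Real.norm_eq_abs, sq_abs, sq_abs]
    ring
  -- angles
  set θ : Fin 4 → ℝ := fun i => (w i).arg with hθ
  have hwθ : ∀ i, w i = (ρ : ℂ) * Complex.exp (θ i * Complex.I) := by
    intro i
    conv_lhs => rw [← Complex.norm_mul_exp_arg_mul_I (w i)]
    rw [habs i]
  have hdist : ∀ i j, ‖r i - r j‖ = 2 * ρ * |Real.sin ((θ i - θ j) / 2)| := by
    intro i j
    rw [habsd i j, hwθ i, hwθ j, chord_formula ρ _ _ hρ.le]
  have hθinj : Function.Injective θ := by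
    intro i j hij
    by_contra hne
    have : r i ≠ r j := fun h => hne (hinj.eq_iff.mp h ▸ rfl)
    have hd : ‖r i - r j‖ ≠ 0 := by
      simpa [sub_eq_zero] using this
    apply hd
    rw [hdist i j, hij]
    simp
  -- sort the angles
  set σ : Equiv.Perm (Fin 4) := Tuple.sort θ with hσ
  have hmono : Monotone (θ ∘ σ) := Tuple.monotone_sort θ
  have hstrict : StrictMono (θ ∘ σ) := hmono.strictMono_of_injective (hθinj.comp σ.injective)
  obtain ⟨ψ, hψeq, hstrict⟩ :
      ∃ ψ : Fin 4 → ℝ, (∀ i, θ (σ i) = ψ i) ∧ StrictMono ψ :=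
    ⟨θ ∘ σ, fun _ => rfl, hstrict⟩
  have h01 : ψ 0 < ψ 1 := hstrict (show (0:Fin 4) < 1 by decide)
  have h12 : ψ 1 < ψ 2 := hstrict (show (1:Fin 4) < 2 by decide)
  have h23 : ψ 2 < ψ 3 := hstrict (show (2:Fin 4) < 3 by decide)
  have hrange : ψ 3 - ψ 0 < 2 * π := by
    have l1 : -π < θ (σ 0) := Complex.neg_pi_lt_arg _
    have l2 : θ (σ 3) ≤ π := Complex.arg_le_pi _
    rw [hψeq 0] at l1
    rw [hψeq 3] at l2
    linarith
  -- half-arcs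
  have hx : 0 < (ψ 2 - ψ 1) / 2 := by linarith
  have hs : 0 < (ψ 1 - ψ 0) / 2 := by linarith
  have ht : 0 < (ψ 3 - ψ 2) / 2 := by linarith
  have hsum : (ψ 2 - ψ 1) / 2 + (ψ 1 - ψ 0) / 2 + (ψ 3 - ψ 2) / 2 < π := by linarith
  have key := combo hx hs ht hsum
  rw [show (ψ 2 - ψ 1) / 2 + (ψ 1 - ψ 0) / 2 = (ψ 2 - ψ 0) / 2 by ring,
      show (ψ 2 - ψ 1) / 2 + (ψ 3 - ψ 2) / 2 = (ψ 3 - ψ 1) / 2 by ring,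
      show (ψ 2 - ψ 0) / 2 + (ψ 3 - ψ 2) / 2 = (ψ 3 - ψ 0) / 2 by ring]
    at key
  -- sorted distances
  have hdistψ : ∀ i j : Fin 4, 0 < (ψ j - ψ i) / 2 → (ψ j - ψ i) / 2 < π →
      ‖r (σ i) - r (σ j)‖ = 2 * ρ * Real.sin ((ψ j - ψ i) / 2) := by
    intro i j hpos hlt
    rw [hdist (σ i) (σ j), hψeq i, hψeq j,
      show (ψ i - ψ j) / 2 = -((ψ j - ψ i) / 2) by ring, Real.sin_neg,
      abs_neg, abs_of_pos (Real.sin_pos_of_pos_of_lt_pi hpos hlt)]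
  have d02 : ‖r (σ 0) - r (σ 2)‖ = 2 * ρ * Real.sin ((ψ 2 - ψ 0) / 2) :=
    hdistψ 0 2 (by linarith) (by linarith)
  have d13 : ‖r (σ 1) - r (σ 3)‖ = 2 * ρ * Real.sin ((ψ 3 - ψ 1) / 2) :=
    hdistψ 1 3 (by linarith) (by linarith)
  have d12 : ‖r (σ 1) - r (σ 2)‖ = 2 * ρ * Real.sin ((ψ 2 - ψ 1) / 2) :=
    hdistψ 1 2 (by linarith) (by linarith)
  have d03 : ‖r (σ 0) - r (σ 3)‖ = 2 * ρ * Real.sin ((ψ 3 - ψ 0) / 2) :=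
    hdistψ 0 3 (by linarith) (by linarith)
  -- the three matching sums are all equal
  set T : Fin 4 → Fin 4 → ℝ := fun i j => 1 / ‖r i - r j‖ ^ 3 with hT
  have hsymm : ∀ i j, T i j = T j i := by
    intro i j
    simp only [hT, norm_sub_rev]
  have hall : ∀ τ : Fin 4 → Fin 4, Function.Injective τ →
      T (τ 0) (τ 2) + T (τ 1) (τ 3) = T 0 1 + T 2 3 := by
    intro τ hτ
    have hA : T 0 1 + T 2 3 = T 0 2 + T 1 3 := by
      simpa only [hT, norm_sub_rev] using h1
    have hB : T 0 2 + T 1 3 = T 0 3 + T 1 2 := by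
      have := h2
      simp only [hT]
      rw [norm_sub_rev (r 0) (r 2), norm_sub_rev (r 1) (r 3), norm_sub_rev (r 0) (r 3),
        norm_sub_rev (r 1) (r 2)]
      linarith [h2]
    rcases matching_sum T hsymm τ hτ with h | h | h <;> linarith
  -- dispatch
  have hM : T (σ 0) (σ 2) + T (σ 1) (σ 3) = T 0 1 + T 2 3 := hall σ σ.injective
  have hS : T (σ 1) (σ 2) + T (σ 0) (σ 3) = T 0 1 + T 2 3 := by
    have hι : Function.Injective (fun i => (![1, 0, 2, 3] : Fin 4 → Fin 4) i) := by decide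
    have := hall (fun i => σ (![1, 0, 2, 3] i)) (σ.injective.comp hι)
    simpa using this
  have hfac : ∀ y : ℝ, 0 < Real.sin y → 1 / (2 * ρ * Real.sin y) ^ 3
      = (1 / (2 * ρ) ^ 3) * (1 / Real.sin y ^ 3) := by
    intro y hy
    rw [mul_pow]
    rw [one_div, mul_inv, ← one_div, ← one_div]
  have hMval : T (σ 0) (σ 2) + T (σ 1) (σ 3)
      = (1 / (2 * ρ) ^ 3) * (1 / Real.sin ((ψ 2 - ψ 0) / 2) ^ 3
          + 1 / Real.sin ((ψ 3 - ψ 1) / 2) ^ 3) := by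
    simp only [hT]
    rw [d02, d13, hfac _ (Real.sin_pos_of_pos_of_lt_pi (by linarith) (by linarith)),
      hfac _ (Real.sin_pos_of_pos_of_lt_pi (by linarith) (by linarith))]
    ring
  have hSval : T (σ 1) (σ 2) + T (σ 0) (σ 3)
      = (1 / (2 * ρ) ^ 3) * (1 / Real.sin ((ψ 2 - ψ 1) / 2) ^ 3
          + 1 / Real.sin ((ψ 3 - ψ 0) / 2) ^ 3) := by
    simp only [hT]
    rw [d12, d03, hfac _ (Real.sin_pos_of_pos_of_lt_pi (by linarith) (by linarith)),
      hfac _ (Real.sin_pos_of_pos_of_lt_pi (by linarith) (by linarith))]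
    ring
  have hcoef : 0 < 1 / (2 * ρ) ^ 3 := by positivity
  have hlt := mul_lt_mul_of_pos_left key hcoef
  rw [← hMval, ← hSval] at hlt
  linarith
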